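/- Let μ and ν be locally finite Borel measures on ℝ^m and let g: ℝ^m → ℝ^m be a bi-Lipschitz homeomorphism (there exists C ≥ 1 with C⁻¹‖x − z‖ ≤ ‖g(x) − g(z)‖ ≤ C‖x − z‖ for all x, z) such that g_*μ is absolutely continuous with respect to ν. Then for each bounded (g_*μ, ν)-density point y: (1) the upper pointwise dimension of ν at y equals the upper pointwise dimension of μ at g⁻¹(y); (2) the lower pointwise dimension of ν at y equals the lower pointwise dimension of μ at g⁻¹(y). -/

import Mathlib

open MeasureTheory Filter Metric
open scoped ENNReal

/-- Upper pointwise dimension: `limsup_{r→0⁺} log μ(B(x,r)) / log r`. -/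
noncomputable def upperPointwiseDim {m : ℕ} (μ : Measure (EuclideanSpace ℝ (Fin m)))
    (x : EuclideanSpace ℝ (Fin m)) : ℝ :=
  limsup (fun r : ℝ => Real.log (μ (ball x r)).toReal / Real.log r)
    (nhdsWithin 0 (Set.Ioi 0))

/-- Lower pointwise dimension: `liminf_{r→0⁺} log μ(B(x,r)) / log r`. -/
noncomputable def lowerPointwiseDim {m : ℕ} (μ : Measure (EuclideanSpace ℝ (Fin m)))
    (x : EuclideanSpace ℝ (Fin m)) : ℝ :=
  liminf (fun r : ℝ => Real.log (μ (ball x r)).toReal / Real.log r)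
    (nhdsWithin 0 (Set.Ioi 0))

/-- `y` is a `μ`-density point of the set `A`. -/
def IsDensityPoint {m : ℕ} (μ : Measure (EuclideanSpace ℝ (Fin m)))
    (y : EuclideanSpace ℝ (Fin m)) (A : Set (EuclideanSpace ℝ (Fin m))) : Prop :=
  Tendsto (fun r : ℝ => μ (ball y r ∩ A) / μ (ball y r))
    (nhdsWithin 0 (Set.Ioi 0)) (nhds 1)

/-- `y` is a bounded `(μ', ν)`-density point. -/
def IsBoundedDensityPoint {m : ℕ} (μ' ν : Measure (EuclideanSpace ℝ (Fin m)))
    (y : EuclideanSpace ℝ (Fin m)) : Prop :=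
  ∃ N : ℝ, 0 < N ∧
    IsDensityPoint ν y
      {x | ENNReal.ofReal (1 / N) ≤ μ'.rnDeriv ν x ∧ μ'.rnDeriv ν x ≤ ENNReal.ofReal N} ∧
    IsDensityPoint μ' y
      {x | ENNReal.ofReal (1 / N) ≤ μ'.rnDeriv ν x ∧ μ'.rnDeriv ν x ≤ ENNReal.ofReal N}


private lemma map_mul_left_nhdsWithin_zero {C : ℝ} (hC : 0 < C) :
    Filter.map (fun r : ℝ => C * r) (nhdsWithin 0 (Set.Ioi 0)) = nhdsWithin 0 (Set.Ioi 0) := by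
  have key : ∀ c : ℝ, 0 < c →
      Filter.Tendsto (fun r : ℝ => c * r) (nhdsWithin 0 (Set.Ioi 0)) (nhdsWithin 0 (Set.Ioi 0)) := by
    intro c hc
    apply tendsto_nhdsWithin_of_tendsto_nhds_of_eventually_within
    · have : Filter.Tendsto (fun r : ℝ => c * r) (nhds 0) (nhds (c * 0)) :=
        (continuous_const.mul continuous_id).tendsto 0
      simpa using this.mono_left nhdsWithin_le_nhds
    · filter_upwards [self_mem_nhdsWithin] with r hr
      exact mul_pos hc hr
  refine le_antisymm (key C hC) ?_
  have h2 := key C⁻¹ (inv_pos.2 hC)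
  calc nhdsWithin (0:ℝ) (Set.Ioi 0)
      = Filter.map (fun r : ℝ => C * r) (Filter.map (fun r : ℝ => C⁻¹ * r) (nhdsWithin 0 (Set.Ioi 0))) := by
        rw [Filter.map_map]
        have : ((fun r : ℝ => C * r) ∘ fun r : ℝ => C⁻¹ * r) = id := by
          funext x; simp [Function.comp, ← mul_assoc, mul_inv_cancel₀ hC.ne']
        rw [this, Filter.map_id]
    _ ≤ Filter.map (fun r : ℝ => C * r) (nhdsWithin 0 (Set.Ioi 0)) := Filter.map_mono h2


private lemma core_lemma {α : Type*} (l : Filter α) [l.NeBot] (F H : α → ℝ) (T : α → α)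
    (hT : Filter.map T l = l) (e q : α → ℝ)
    (he : Filter.Tendsto e l (nhds 0))
    (hq : Filter.Tendsto q l (nhds 1))
    (hq0 : ∀ᶠ r in l, 0 < q r) (hq1 : ∀ᶠ r in l, q r ≤ 1)
    (hFH : ∀ᶠ r in l, e r + H (T r) * q r ≤ F r)
    (hHF : ∀ᶠ r in l, e r + F (T r) * q r ≤ H r)
    (hFb : ∀ᶠ r in l, -1 ≤ F r) (hHb : ∀ᶠ r in l, -1 ≤ H r) :
    Filter.limsup F l = Filter.limsup H l ∧ Filter.liminf F l = Filter.liminf H l := by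
  have hev : ∀ (P : α → Prop), (∀ᶠ r in l, P (T r)) ↔ (∀ᶠ r in l, P r) := by
    intro P
    rw [← Filter.eventually_map (m := T), hT]
  have hlimsup_comp : ∀ (A : α → ℝ),
      Filter.limsup (fun r => A (T r)) l = Filter.limsup A l := by
    intro A
    have hmm : Filter.map (fun r => A (T r)) l = Filter.map A l := by
      conv_rhs => rw [← hT, Filter.map_map]
      rfl
    rw [Filter.limsup, Filter.limsup, hmm]
  have hliminf_comp : ∀ (A : α → ℝ),
      Filter.liminf (fun r => A (T r)) l = Filter.liminf A l := by
    intro A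
    have hmm : Filter.map (fun r => A (T r)) l = Filter.map A l := by
      conv_rhs => rw [← hT, Filter.map_map]
      rfl
    rw [Filter.liminf, Filter.liminf, hmm]
  have he' : ∀ c : ℝ, 0 < c → ∀ᶠ r in l, -c < e r := fun c hc =>
    he.eventually (eventually_gt_nhds (by linarith))
  have hq' : ∀ c : ℝ, c < 1 → ∀ᶠ r in l, c < q r := fun c hc =>
    hq.eventually (eventually_gt_nhds hc)
  -- boundedness transfer
  have main_bdd : ∀ A B : α → ℝ, (∀ᶠ r in l, e r + B (T r) * q r ≤ A r) →
      IsBoundedUnder (· ≤ ·) l A → IsBoundedUnder (· ≤ ·) l B := by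
    intro A B hAB ⟨b, hb⟩
    rw [Filter.eventually_map] at hb
    refine ⟨max (2 * (b + 1)) 0, Filter.eventually_map.2 ?_⟩
    rw [← hev fun r => B r ≤ max (2 * (b + 1)) 0]
    filter_upwards [hAB, hb, he' 1 one_pos, hq' (1/2) (by norm_num), hq1] with r h1 h2 h3 h4 h5
    rcases le_or_gt (B (T r)) 0 with h | h
    · exact h.trans (le_max_right _ _)
    · have hq2 : B (T r) * (1/2) ≤ B (T r) * q r := by
        apply mul_le_mul_of_nonneg_left h4.le h.le
      have : B (T r) * q r ≤ b + 1 := by linarith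
      refine le_trans ?_ (le_max_left _ _)
      nlinarith
  -- atTop transfer
  have main_top : ∀ A B : α → ℝ, (∀ᶠ r in l, e r + B (T r) * q r ≤ A r) →
      Filter.Tendsto B l Filter.atTop → Filter.Tendsto A l Filter.atTop := by
    intro A B hAB hB
    rw [Filter.tendsto_atTop] at hB ⊢
    intro b
    have hBT : ∀ᶠ r in l, max (2 * (b + 1)) 0 ≤ B (T r) :=
      (hev fun r => max (2 * (b + 1)) 0 ≤ B r).2 (hB _)
    filter_upwards [hAB, hBT, he' 1 one_pos, hq' (1/2) (by norm_num)] with r h1 h2 h3 h4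
    have hB0 : 0 ≤ B (T r) := le_trans (le_max_right _ _) h2
    have hB1 : 2 * (b + 1) ≤ B (T r) := le_trans (le_max_left _ _) h2
    have : B (T r) * (1/2) ≤ B (T r) * q r := mul_le_mul_of_nonneg_left h4.le hB0
    nlinarith
  -- limsup comparison in the bounded case
  have main_limsup : ∀ A B : α → ℝ, (∀ᶠ r in l, e r + B (T r) * q r ≤ A r) →
      (∀ᶠ r in l, -1 ≤ A r) → (∀ᶠ r in l, -1 ≤ B r) →
      IsBoundedUnder (· ≤ ·) l A → IsBoundedUnder (· ≤ ·) l B →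
      Filter.limsup B l ≤ Filter.limsup A l := by
    intro A B hAB hAb hBb hAbdd hBbdd
    refine le_of_forall_pos_le_add fun δ hδ => ?_
    obtain ⟨b0, hb0⟩ := hBbdd
    rw [Filter.eventually_map] at hb0
    obtain ⟨B', hB'⟩ : ∃ x : ℝ, x = max b0 0 := ⟨_, rfl⟩
    have hBB' : ∀ᶠ r in l, B r ≤ B' := hb0.mono fun r h => hB' ▸ h.trans (le_max_left _ _)
    have hB'0 : 0 ≤ B' := hB' ▸ le_max_right _ _
    obtain ⟨ε, hε⟩ : ∃ x : ℝ, x = δ / (2 * (B' + 1)) := ⟨_, rfl⟩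
    have hεpos : 0 < ε := hε ▸ div_pos hδ (by linarith)
    have key : ∀ᶠ r in l, B (T r) ≤ A r + δ := by
      filter_upwards [hAB, (hev fun r => B r ≤ B').2 hBB', he' (δ/2) (by linarith),
        hq' (1 - ε) (by linarith), hq1, hq0] with r h1 h2 h3 h4 h5 h6
      rcases le_or_gt (B (T r)) 0 with h | h
      · -- B(Tr) ≤ 0 : B(Tr) * q ≥ B(Tr)
        have : B (T r) * q r ≥ B (T r) := by nlinarith
        linarith
      · have h7 : B (T r) * q r ≥ B (T r) * (1 - ε) := by nlinarith
        have h8 : ε * B (T r) ≤ ε * B' := mul_le_mul_of_nonneg_left h2 hεpos.le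
        have h9 : ε * B' ≤ δ / 2 := by
          rw [hε]
          rw [div_mul_eq_mul_div, div_le_div_iff₀ (by linarith) (by norm_num)]
          nlinarith
        nlinarith
    have cobdd : Filter.IsCoboundedUnder (· ≤ ·) l (fun r => B (T r)) :=
      Filter.isCoboundedUnder_le_of_eventually_le l ((hev fun r => -1 ≤ B r).2 hBb)
    have hAδbdd : IsBoundedUnder (· ≤ ·) l (fun r => A r + δ) := by
      obtain ⟨a0, ha0⟩ := hAbdd
      rw [Filter.eventually_map] at ha0
      exact ⟨a0 + δ, Filter.eventually_map.2 <| ha0.mono fun r h => by linarith⟩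
    have hstep := Filter.limsup_le_limsup key cobdd hAδbdd
    rw [hlimsup_comp B] at hstep
    have hAcob : Filter.IsCoboundedUnder (· ≤ ·) l A :=
      Filter.isCoboundedUnder_le_of_eventually_le l hAb
    rwa [limsup_add_const l A δ hAbdd hAcob] at hstep
  -- liminf comparison in the non-atTop case
  have main_liminf : ∀ A B : α → ℝ, (∀ᶠ r in l, e r + B (T r) * q r ≤ A r) →
      (∀ᶠ r in l, -1 ≤ A r) → (∀ᶠ r in l, -1 ≤ B r) →
      ¬ Filter.Tendsto A l Filter.atTop →
      Filter.liminf B l ≤ Filter.liminf A l := by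
    intro A B hAB hAb hBb hAnt
    have hSA_bdd : BddAbove {a : ℝ | ∀ᶠ r in l, a ≤ A r} := by
      rw [Filter.tendsto_atTop] at hAnt
      push_neg at hAnt
      obtain ⟨b, hb⟩ := hAnt
      try rw [Filter.not_eventually] at hb
      refine ⟨b, fun a ha => ?_⟩
      obtain ⟨r, hr1, hr2⟩ := (hb.and_eventually ha).exists
      try push_neg at hr1
      linarith
    have hSB_ne : ({a : ℝ | ∀ᶠ r in l, a ≤ B r}).Nonempty := ⟨-1, hBb⟩
    refine le_of_forall_pos_le_add fun δ hδ => ?_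
    obtain ⟨LB, hLB0⟩ : ∃ x : ℝ, x = Filter.liminf B l := ⟨_, rfl⟩
    have hLB : LB = sSup {a : ℝ | ∀ᶠ n in l, a ≤ B n} := by rw [hLB0, Filter.liminf_eq]
    obtain ⟨L0, hL0⟩ : ∃ x : ℝ, x = LB - δ/3 := ⟨_, rfl⟩
    have hBε : ∀ᶠ r in l, L0 ≤ B r := by
      rw [hL0]
      have h : LB - δ/3 < sSup {a : ℝ | ∀ᶠ r in l, a ≤ B r} := by rw [← hLB]; linarith
      obtain ⟨c, hc, hc2⟩ := exists_lt_of_lt_csSup hSB_ne h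
      exact hc.mono fun r hr => by linarith
    obtain ⟨ε, hε⟩ : ∃ x : ℝ, x = (δ/3) / (|L0| + 1) := ⟨_, rfl⟩
    have habs : 0 < |L0| + 1 := by positivity
    have hεpos : 0 < ε := hε ▸ div_pos (by linarith) habs
    have key : ∀ᶠ r in l, LB - δ ≤ A r := by
      filter_upwards [hAB, (hev fun r => L0 ≤ B r).2 hBε, he' (δ/3) (by linarith),
        hq' (1 - ε) (by linarith), hq1, hq0] with r h1 h2 h3 h4 h5 h6
      have hεL : ε * L0 ≤ δ/3 := by
        have e1 : ε * L0 ≤ ε * (|L0| + 1) :=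
          mul_le_mul_of_nonneg_left (by linarith [le_abs_self L0]) hεpos.le
        have e2 : ε * (|L0| + 1) = δ/3 := by
          rw [hε, div_mul_cancel₀ _ habs.ne']
        linarith
      have hXq : L0 - δ/3 ≤ B (T r) * q r := by
        rcases le_or_gt (B (T r)) 0 with h | h
        · have : (1 - q r) * (- B (T r)) ≥ 0 := mul_nonneg (by linarith) (by linarith)
          nlinarith
        · rcases le_or_gt L0 0 with hL | hL
          · nlinarith [mul_nonneg h.le h6.le]
          · rcases lt_or_ge ε 1 with he1 | he1
            · have b1 : B (T r) * (1 - ε) ≤ B (T r) * q r :=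
                mul_le_mul_of_nonneg_left h4.le h.le
              have b2 : L0 * (1 - ε) ≤ B (T r) * (1 - ε) :=
                mul_le_mul_of_nonneg_right h2 (by linarith)
              nlinarith
            · nlinarith [mul_nonneg h.le h6.le]
      linarith [hL0.ge]
    have : LB - δ ≤ Filter.liminf A l := by
      rw [Filter.liminf_eq]
      exact le_csSup hSA_bdd key
    linarith
  constructor
  · by_cases hb : IsBoundedUnder (· ≤ ·) l F
    · have hbH : IsBoundedUnder (· ≤ ·) l H := main_bdd F H hFH hb
      exact le_antisymm (main_limsup H F hHF hHb hFb hbH hb)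
        (main_limsup F H hFH hFb hHb hb hbH)
    · have hbH : ¬ IsBoundedUnder (· ≤ ·) l H := fun h => hb (main_bdd H F hHF h)
      have hempty : ∀ A : α → ℝ, ¬ IsBoundedUnder (· ≤ ·) l A →
          Filter.limsup A l = 0 := by
        intro A hA
        rw [Filter.limsup_eq]
        refine (congrArg sInf ?_).trans Real.sInf_empty
        rw [Set.eq_empty_iff_forall_notMem]
        intro a ha
        exact hA ⟨a, Filter.eventually_map.2 ha⟩
      rw [hempty F hb, hempty H hbH]
  · by_cases ht : Filter.Tendsto F l Filter.atTop
    · have htH : Filter.Tendsto H l Filter.atTop := main_top H F hHF ht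
      have huniv : ∀ A : α → ℝ, Filter.Tendsto A l Filter.atTop →
          Filter.liminf A l = 0 := by
        intro A hA
        rw [Filter.liminf_eq]
        have : {a : ℝ | ∀ᶠ r in l, a ≤ A r} = Set.univ := by
          rw [Set.eq_univ_iff_forall]
          intro a
          exact (Filter.tendsto_atTop.1 hA) a
        rw [this]
        exact Real.sSup_of_not_bddAbove (by simpa using not_bddAbove_univ)
      rw [huniv F ht, huniv H htH]
    · have htH : ¬ Filter.Tendsto H l Filter.atTop := fun h => ht (main_top F H hFH h)
      exact le_antisymm (main_liminf H F hHF hHb hFb htH)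
        (main_liminf F H hFH hFb hHb ht)


private lemma dims_eq (f h : ℝ → ℝ≥0∞) (a K M : ℝ) (ha : 1 ≤ a) (hK : 1 ≤ K) (hM : 1 ≤ M)
    (hmap : Filter.map (fun r : ℝ => a * r) (nhdsWithin 0 (Set.Ioi 0))
      = nhdsWithin 0 (Set.Ioi 0))
    (hfM : ∀ᶠ r in nhdsWithin (0:ℝ) (Set.Ioi 0), f r ≤ ENNReal.ofReal M)
    (hhM : ∀ᶠ r in nhdsWithin (0:ℝ) (Set.Ioi 0), h r ≤ ENNReal.ofReal M)
    (hf0 : ∀ᶠ r in nhdsWithin (0:ℝ) (Set.Ioi 0), 0 < f r)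
    (hh0 : ∀ᶠ r in nhdsWithin (0:ℝ) (Set.Ioi 0), 0 < h r)
    (h1 : ∀ᶠ r in nhdsWithin (0:ℝ) (Set.Ioi 0), f r ≤ ENNReal.ofReal K * h (a * r))
    (h2 : ∀ᶠ r in nhdsWithin (0:ℝ) (Set.Ioi 0), h r ≤ ENNReal.ofReal K * f (a * r)) :
    Filter.limsup (fun r : ℝ => Real.log (f r).toReal / Real.log r)
        (nhdsWithin 0 (Set.Ioi 0))
      = Filter.limsup (fun r : ℝ => Real.log (h r).toReal / Real.log r)
        (nhdsWithin 0 (Set.Ioi 0)) ∧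
    Filter.liminf (fun r : ℝ => Real.log (f r).toReal / Real.log r)
        (nhdsWithin 0 (Set.Ioi 0))
      = Filter.liminf (fun r : ℝ => Real.log (h r).toReal / Real.log r)
        (nhdsWithin 0 (Set.Ioi 0)) := by
  set l : Filter ℝ := nhdsWithin 0 (Set.Ioi 0) with hl
  have ha0 : 0 < a := lt_of_lt_of_le one_pos ha
  have hK0 : 0 < K := lt_of_lt_of_le one_pos hK
  have hev : ∀ (P : ℝ → Prop), (∀ᶠ r in l, P (a * r)) ↔ (∀ᶠ r in l, P r) := by
    intro P
    rw [← Filter.eventually_map (m := fun r : ℝ => a * r), hmap]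
  have hr0 : ∀ᶠ r in l, 0 < r := eventually_mem_nhdsWithin
  have hrlt : ∀ c : ℝ, 0 < c → ∀ᶠ r in l, r < c := by
    intro c hc
    exact ((tendsto_id.mono_left nhdsWithin_le_nhds).eventually (eventually_lt_nhds hc))
  have hlog_neg : ∀ᶠ r in l, Real.log r < 0 := by
    filter_upwards [hr0, hrlt 1 one_pos] with r h1 h2
    exact Real.log_neg h1 h2
  have hlogbot : Filter.Tendsto (fun r : ℝ => Real.log r) l atBot :=
    Real.tendsto_log_nhdsGT_zero
  have hloginv : Filter.Tendsto (fun r : ℝ => (Real.log r)⁻¹) l (nhds 0) := by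
    have h1 : Filter.Tendsto (fun r : ℝ => -Real.log r) l atTop :=
      tendsto_neg_atBot_atTop.comp hlogbot
    have h2 : Filter.Tendsto (fun r : ℝ => (-Real.log r)⁻¹) l (nhds 0) :=
      tendsto_inv_atTop_zero.comp h1
    have h3 := h2.neg
    rw [neg_zero] at h3
    refine h3.congr fun r => ?_
    rw [← inv_neg, neg_neg]
  set e : ℝ → ℝ := fun r => Real.log K / Real.log r with he_def
  set q : ℝ → ℝ := fun r => Real.log (a * r) / Real.log r with hq_def
  have he : Filter.Tendsto e l (nhds 0) := by
    have := hloginv.const_mul (Real.log K)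
    rw [mul_zero] at this
    exact this.congr fun r => (div_eq_mul_inv _ _).symm
  have hq : Filter.Tendsto q l (nhds 1) := by
    have h0 : Filter.Tendsto (fun r : ℝ => Real.log a * (Real.log r)⁻¹ + 1) l
        (nhds (Real.log a * 0 + 1)) := (hloginv.const_mul (Real.log a)).add_const 1
    rw [mul_zero, zero_add] at h0
    refine h0.congr' ?_
    filter_upwards [hr0, hlog_neg] with r hr hln
    show Real.log a * (Real.log r)⁻¹ + 1 = Real.log (a * r) / Real.log r
    rw [Real.log_mul ha0.ne' hr.ne', add_div, div_self hln.ne, div_eq_mul_inv]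
  have hq1 : ∀ᶠ r in l, q r ≤ 1 := by
    filter_upwards [hr0, hlog_neg] with r hr hln
    have hle : Real.log r ≤ Real.log (a * r) := by
      apply Real.log_le_log hr
      nlinarith
    calc q r = Real.log (a * r) / Real.log r := rfl
      _ ≤ Real.log r / Real.log r := by rw [div_le_div_right_of_neg hln]; exact hle
      _ = 1 := div_self hln.ne
  have hq0 : ∀ᶠ r in l, 0 < q r := by
    filter_upwards [hr0, hrlt a⁻¹ (inv_pos.2 ha0), hlog_neg] with r hr hra hln
    have har1 : a * r < 1 := by
      have := (mul_lt_mul_iff_right₀ ha0).2 hra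
      rwa [mul_inv_cancel₀ ha0.ne'] at this
    have hlar : Real.log (a * r) < 0 := Real.log_neg (by positivity) har1
    exact div_pos_iff.2 (Or.inr ⟨hlar, hln⟩)
  have hlar_neg : ∀ᶠ r in l, Real.log (a * r) < 0 := by
    filter_upwards [hr0, hrlt a⁻¹ (inv_pos.2 ha0)] with r hr hra
    have har1 : a * r < 1 := by
      have := (mul_lt_mul_iff_right₀ ha0).2 hra
      rwa [mul_inv_cancel₀ ha0.ne'] at this
    exact Real.log_neg (by positivity) har1
  -- the main eventual inequality, stated symmetrically
  have master : ∀ f' h' : ℝ → ℝ≥0∞,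
      (∀ᶠ r in l, 0 < f' r) → (∀ᶠ r in l, f' r ≤ ENNReal.ofReal M) →
      (∀ᶠ r in l, 0 < h' r) → (∀ᶠ r in l, h' r ≤ ENNReal.ofReal M) →
      (∀ᶠ r in l, f' r ≤ ENNReal.ofReal K * h' (a * r)) →
      (∀ᶠ r in l, e r + (Real.log (h' (a * r)).toReal / Real.log (a * r)) * q r
        ≤ Real.log (f' r).toReal / Real.log r) := by
    intro f' h' hf'0 hf'M hh'0 hh'M hcomp
    filter_upwards [hcomp, hf'0, hf'M, (hev fun s => 0 < h' s).2 hh'0,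
      (hev fun s => h' s ≤ ENNReal.ofReal M).2 hh'M, hlog_neg, hlar_neg]
      with r hc hx0' hxM' hz0' hzM' hln hlar
    have hxtop : f' r ≠ ∞ :=
      ne_top_of_le_ne_top ENNReal.ofReal_ne_top hxM'
    have hztop : h' (a * r) ≠ ∞ :=
      ne_top_of_le_ne_top ENNReal.ofReal_ne_top hzM'
    set x : ℝ := (f' r).toReal with hx_def
    set z : ℝ := (h' (a * r)).toReal with hz_def
    have hx0 : 0 < x := ENNReal.toReal_pos hx0'.ne' hxtop
    have hz0 : 0 < z := ENNReal.toReal_pos hz0'.ne' hztop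
    have hxz : x ≤ K * z := by
      have h' : (f' r).toReal ≤ (ENNReal.ofReal K * h' (a * r)).toReal :=
        ENNReal.toReal_mono (ENNReal.mul_ne_top ENNReal.ofReal_ne_top hztop) hc
      rwa [ENNReal.toReal_mul, ENNReal.toReal_ofReal hK0.le] at h'
    have hlogx : Real.log x ≤ Real.log K + Real.log z := by
      calc Real.log x ≤ Real.log (K * z) := Real.log_le_log hx0 hxz
        _ = Real.log K + Real.log z := Real.log_mul hK0.ne' hz0.ne'
    have hprod : Real.log z / Real.log (a * r) * q r = Real.log z / Real.log r := by
      show Real.log z / Real.log (a * r) * (Real.log (a * r) / Real.log r)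
        = Real.log z / Real.log r
      rw [div_mul_div_comm, mul_comm (Real.log (a * r)) (Real.log r), mul_div_mul_comm,
        div_self hlar.ne, mul_one]
    rw [hprod, he_def]
    calc Real.log K / Real.log r + Real.log z / Real.log r
        = (Real.log K + Real.log z) / Real.log r := by rw [← add_div]
      _ ≤ Real.log x / Real.log r := by
          rw [div_le_div_right_of_neg hln]; exact hlogx
  have bnd : ∀ f' : ℝ → ℝ≥0∞, (∀ᶠ r in l, 0 < f' r) →
      (∀ᶠ r in l, f' r ≤ ENNReal.ofReal M) →
      (∀ᶠ r in l, -1 ≤ Real.log (f' r).toReal / Real.log r) := by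
    intro f' hf'0 hf'M
    filter_upwards [hf'0, hf'M, hlog_neg,
      hlogbot.eventually (eventually_le_atBot (-(Real.log M)))] with r h0 hMr hln hlr
    have hxtop : f' r ≠ ∞ := ne_top_of_le_ne_top ENNReal.ofReal_ne_top hMr
    have hx0 : 0 < (f' r).toReal := ENNReal.toReal_pos h0.ne' hxtop
    have hxM : (f' r).toReal ≤ M := ENNReal.toReal_le_of_le_ofReal (by linarith) hMr
    have hlogx : Real.log (f' r).toReal ≤ Real.log M := Real.log_le_log hx0 hxM
    rw [le_div_iff_of_neg hln]
    linarith
  exact core_lemma l _ _ (fun r => a * r) hmap e q he hq hq0 hq1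
    (master f h hf0 hfM hh0 hhM h1) (master h f hh0 hhM hf0 hfM h2)
    (bnd f hf0 hfM) (bnd h hh0 hhM)

theorem stmt3 {m : ℕ} (μ ν : Measure (EuclideanSpace ℝ (Fin m)))
    [IsLocallyFiniteMeasure μ] [IsLocallyFiniteMeasure ν]
    (g g' : EuclideanSpace ℝ (Fin m) → EuclideanSpace ℝ (Fin m))
    (hleft : Function.LeftInverse g' g) (hright : Function.RightInverse g' g)
    (C : ℝ) (hC : 1 ≤ C)
    (hbilip : ∀ x z : EuclideanSpace ℝ (Fin m),
      C⁻¹ * ‖x - z‖ ≤ ‖g x - g z‖ ∧ ‖g x - g z‖ ≤ C * ‖x - z‖)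
    (hac : Measure.map g μ ≪ ν)
    (y : EuclideanSpace ℝ (Fin m))
    (hy : IsBoundedDensityPoint (Measure.map g μ) ν y) :
    upperPointwiseDim ν y = upperPointwiseDim μ (g' y) ∧
    lowerPointwiseDim ν y = lowerPointwiseDim μ (g' y) := by
  classical
  obtain ⟨N, hN, hdν, hdμ'⟩ := hy
  have hC0 : 0 < C := lt_of_lt_of_le one_pos hC
  -- basic facts about g
  have hg_lip : LipschitzWith (Real.toNNReal C) g := by
    apply LipschitzWith.of_dist_le_mul
    intro x z
    rw [dist_eq_norm, dist_eq_norm, Real.coe_toNNReal C hC0.le]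
    exact (hbilip x z).2
  have hg_meas : Measurable g := hg_lip.continuous.measurable
  have hmapply : ∀ (c : EuclideanSpace ℝ (Fin m)) (r : ℝ),
      Measure.map g μ (ball c r) = μ (g ⁻¹' ball c r) := fun c r =>
    Measure.map_apply hg_meas measurableSet_ball
  have hsub1 : ∀ (c : EuclideanSpace ℝ (Fin m)) (r : ℝ),
      g ⁻¹' ball c r ⊆ ball (g' c) (C * r) := by
    intro c r x hx
    rw [Set.mem_preimage, mem_ball, dist_eq_norm] at hx
    rw [mem_ball, dist_eq_norm]
    have h1 := (hbilip x (g' c)).1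
    rw [hright c] at h1
    calc ‖x - g' c‖ = C * (C⁻¹ * ‖x - g' c‖) := by
          rw [← mul_assoc, mul_inv_cancel₀ hC0.ne', one_mul]
      _ ≤ C * ‖g x - c‖ := mul_le_mul_of_nonneg_left h1 hC0.le
      _ < C * r := (mul_lt_mul_iff_right₀ hC0).2 hx
  have hsub2 : ∀ r : ℝ, ball (g' y) r ⊆ g ⁻¹' ball y (C * r) := by
    intro r x hx
    rw [mem_ball, dist_eq_norm] at hx
    rw [Set.mem_preimage, mem_ball, dist_eq_norm]
    have h2 := (hbilip x (g' y)).2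
    rw [hright y] at h2
    calc ‖g x - y‖ ≤ C * ‖x - g' y‖ := h2
      _ < C * r := (mul_lt_mul_iff_right₀ hC0).2 hx
  have key1 : ∀ r : ℝ, Measure.map g μ (ball y r) ≤ μ (ball (g' y) (C * r)) := by
    intro r
    rw [hmapply]
    exact measure_mono (hsub1 y r)
  have key2 : ∀ r : ℝ, μ (ball (g' y) r) ≤ Measure.map g μ (ball y (C * r)) := by
    intro r
    rw [hmapply]
    exact measure_mono (hsub2 r)
  haveI hμ'lf : IsLocallyFiniteMeasure (Measure.map g μ) := by
    refine ⟨fun c => ⟨ball c 1, ball_mem_nhds c one_pos, ?_⟩⟩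
    rw [hmapply]
    exact lt_of_le_of_lt (measure_mono (hsub1 c 1)) measure_ball_lt_top
  -- the good set S
  set S : Set (EuclideanSpace ℝ (Fin m)) :=
    {x | ENNReal.ofReal (1 / N) ≤ (Measure.map g μ).rnDeriv ν x ∧
      (Measure.map g μ).rnDeriv ν x ≤ ENNReal.ofReal N} with hS_def
  have hS_meas : MeasurableSet S := by
    have hJ : Measurable ((Measure.map g μ).rnDeriv ν) := Measure.measurable_rnDeriv _ _
    exact hJ measurableSet_Icc
  -- rnDeriv bounds on subsets of S
  have hrn : ∀ A : Set (EuclideanSpace ℝ (Fin m)), MeasurableSet A → A ⊆ S →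
      ENNReal.ofReal (1 / N) * ν A ≤ Measure.map g μ A ∧
        Measure.map g μ A ≤ ENNReal.ofReal N * ν A := by
    intro A hA hAS
    have hint : ∫⁻ x in A, (Measure.map g μ).rnDeriv ν x ∂ν = Measure.map g μ A :=
      Measure.setLIntegral_rnDeriv' hac hA
    constructor
    · rw [← hint, ← setLIntegral_const A (ENNReal.ofReal (1 / N))]
      exact setLIntegral_mono (Measure.measurable_rnDeriv _ _) fun x hx => (hAS hx).1
    · rw [← hint, ← setLIntegral_const A (ENNReal.ofReal N)]
      exact setLIntegral_mono measurable_const fun x hx => (hAS hx).2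
  -- density consequences
  have density_half : ∀ ρ : Measure (EuclideanSpace ℝ (Fin m)),
      (∀ r : ℝ, ρ (ball y r) ≠ ∞) →
      Filter.Tendsto (fun r : ℝ => ρ (ball y r ∩ S) / ρ (ball y r))
        (nhdsWithin 0 (Set.Ioi 0)) (nhds 1) →
      ∀ᶠ r in nhdsWithin (0:ℝ) (Set.Ioi 0),
        ρ (ball y r) ≤ 2 * ρ (ball y r ∩ S) ∧ 0 < ρ (ball y r) := by
    intro ρ hfin htend
    filter_upwards [htend.eventually
      (eventually_gt_nhds (by norm_num : (1/2 : ℝ≥0∞) < 1))] with r hr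
    have hne : ρ (ball y r) ≠ 0 := by
      intro h0
      have h00 : ρ (ball y r ∩ S) = 0 :=
        le_antisymm (h0 ▸ measure_mono Set.inter_subset_left) zero_le
      rw [h00, h0, ENNReal.zero_div] at hr
      simp at hr
    have hlt : (1/2 : ℝ≥0∞) * ρ (ball y r) < ρ (ball y r ∩ S) :=
      (ENNReal.lt_div_iff_mul_lt (Or.inl hne) (Or.inl (hfin r))).1 hr
    refine ⟨?_, pos_iff_ne_zero.2 hne⟩
    calc ρ (ball y r) = 2 * ((1/2 : ℝ≥0∞) * ρ (ball y r)) := by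
          rw [← mul_assoc, one_div, ENNReal.mul_inv_cancel two_ne_zero ENNReal.ofNat_ne_top,
            one_mul]
      _ ≤ 2 * ρ (ball y r ∩ S) := mul_le_mul_right hlt.le 2
  have hνfin : ∀ r : ℝ, ν (ball y r) ≠ ∞ := fun r => measure_ball_lt_top.ne
  have hμ'fin : ∀ r : ℝ, Measure.map g μ (ball y r) ≠ ∞ := fun r => measure_ball_lt_top.ne
  have hνhalf := density_half ν hνfin hdν
  have hμ'half := density_half (Measure.map g μ) hμ'fin hdμ'
  -- the map filter lemma
  have hmapC : Filter.map (fun r : ℝ => C * r) (nhdsWithin 0 (Set.Ioi 0))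
      = nhdsWithin 0 (Set.Ioi 0) := map_mul_left_nhdsWithin_zero hC0
  have hevC : ∀ (P : ℝ → Prop), (∀ᶠ r in nhdsWithin (0:ℝ) (Set.Ioi 0), P (C * r)) ↔
      (∀ᶠ r in nhdsWithin (0:ℝ) (Set.Ioi 0), P r) := by
    intro P
    rw [← Filter.eventually_map (m := fun r : ℝ => C * r), hmapC]
  -- constants
  set K : ℝ := max (2 * N) 1 with hK_def
  have hK1 : 1 ≤ K := le_max_right _ _
  have h2N : (2 : ℝ≥0∞) * ENNReal.ofReal N ≤ ENNReal.ofReal K := by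
    calc (2 : ℝ≥0∞) * ENNReal.ofReal N = ENNReal.ofReal 2 * ENNReal.ofReal N := by
          rw [ENNReal.ofReal_ofNat]
      _ = ENNReal.ofReal (2 * N) := (ENNReal.ofReal_mul (by norm_num)).symm
      _ ≤ ENNReal.ofReal K := ENNReal.ofReal_le_ofReal (le_max_left _ _)
  -- mediant inequality: ν (B ∩ S) ≤ ofReal N * μ' (B ∩ S)
  have hmed : ∀ r : ℝ, ν (ball y r ∩ S) ≤ ENNReal.ofReal N * Measure.map g μ (ball y r ∩ S) := by
    intro r
    have hlow := (hrn (ball y r ∩ S) (measurableSet_ball.inter hS_meas)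
      Set.inter_subset_right).1
    calc ν (ball y r ∩ S)
        = ENNReal.ofReal N * (ENNReal.ofReal (1/N) * ν (ball y r ∩ S)) := by
          rw [← mul_assoc, ← ENNReal.ofReal_mul hN.le, mul_one_div_cancel hN.ne',
            ENNReal.ofReal_one, one_mul]
      _ ≤ ENNReal.ofReal N * Measure.map g μ (ball y r ∩ S) := mul_le_mul_right hlow _
  -- main comparison, direction 1
  have E_f : ∀ᶠ r in nhdsWithin (0:ℝ) (Set.Ioi 0),
      ν (ball y r) ≤ ENNReal.ofReal K * μ (ball (g' y) (C * r)) := by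
    filter_upwards [hνhalf] with r hr
    calc ν (ball y r) ≤ 2 * ν (ball y r ∩ S) := hr.1
      _ ≤ 2 * (ENNReal.ofReal N * Measure.map g μ (ball y r ∩ S)) :=
          mul_le_mul_right (hmed r) 2
      _ = 2 * ENNReal.ofReal N * Measure.map g μ (ball y r ∩ S) := by rw [mul_assoc]
      _ ≤ ENNReal.ofReal K * Measure.map g μ (ball y r ∩ S) := mul_le_mul_left h2N _
      _ ≤ ENNReal.ofReal K * Measure.map g μ (ball y r) :=
          mul_le_mul_right (measure_mono Set.inter_subset_left) _
      _ ≤ ENNReal.ofReal K * μ (ball (g' y) (C * r)) := mul_le_mul_right (key1 r) _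
  -- main comparison, direction 2
  have E_h : ∀ᶠ r in nhdsWithin (0:ℝ) (Set.Ioi 0),
      μ (ball (g' y) r) ≤ ENNReal.ofReal K * ν (ball y (C * r)) := by
    have hμ'half' : ∀ᶠ r in nhdsWithin (0:ℝ) (Set.Ioi 0),
        Measure.map g μ (ball y (C * r)) ≤ 2 * Measure.map g μ (ball y (C * r) ∩ S) ∧
          0 < Measure.map g μ (ball y (C * r)) :=
      (hevC fun s => Measure.map g μ (ball y s) ≤ 2 * Measure.map g μ (ball y s ∩ S) ∧
        0 < Measure.map g μ (ball y s)).2 hμ'half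
    filter_upwards [hμ'half'] with r hr
    have hup := (hrn (ball y (C * r) ∩ S) (measurableSet_ball.inter hS_meas)
      Set.inter_subset_right).2
    calc μ (ball (g' y) r) ≤ Measure.map g μ (ball y (C * r)) := key2 r
      _ ≤ 2 * Measure.map g μ (ball y (C * r) ∩ S) := hr.1
      _ ≤ 2 * (ENNReal.ofReal N * ν (ball y (C * r) ∩ S)) := mul_le_mul_right hup 2
      _ = 2 * ENNReal.ofReal N * ν (ball y (C * r) ∩ S) := by rw [mul_assoc]
      _ ≤ ENNReal.ofReal K * ν (ball y (C * r) ∩ S) := mul_le_mul_left h2N _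
      _ ≤ ENNReal.ofReal K * ν (ball y (C * r)) :=
          mul_le_mul_right (measure_mono Set.inter_subset_left) _
  -- positivity
  have hf0 : ∀ᶠ r in nhdsWithin (0:ℝ) (Set.Ioi 0), 0 < ν (ball y r) :=
    hνhalf.mono fun r hr => hr.2
  have hh0 : ∀ᶠ r in nhdsWithin (0:ℝ) (Set.Ioi 0), 0 < μ (ball (g' y) r) := by
    have h0 : ∀ᶠ r in nhdsWithin (0:ℝ) (Set.Ioi 0), 0 < μ (ball (g' y) (C * r)) :=
      hμ'half.mono fun r hr => lt_of_lt_of_le hr.2 (key1 r)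
    exact (hevC fun s => 0 < μ (ball (g' y) s)).1 h0
  -- uniform upper bound
  set M : ℝ := max (max (ν (ball y 1)).toReal ((μ (ball (g' y) C)).toReal)) 1 with hM_def
  have hM1 : 1 ≤ M := le_max_right _ _
  have hrlt1 : ∀ᶠ r in nhdsWithin (0:ℝ) (Set.Ioi 0), r < 1 :=
    (tendsto_id.mono_left nhdsWithin_le_nhds).eventually (eventually_lt_nhds one_pos)
  have hfM : ∀ᶠ r in nhdsWithin (0:ℝ) (Set.Ioi 0), ν (ball y r) ≤ ENNReal.ofReal M := by
    filter_upwards [hrlt1] with r hr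
    calc ν (ball y r) ≤ ν (ball y 1) := measure_mono (ball_subset_ball hr.le)
      _ = ENNReal.ofReal ((ν (ball y 1)).toReal) := (ENNReal.ofReal_toReal (hνfin 1)).symm
      _ ≤ ENNReal.ofReal M := ENNReal.ofReal_le_ofReal
          ((le_max_left _ _).trans (le_max_left _ _))
  have hhM : ∀ᶠ r in nhdsWithin (0:ℝ) (Set.Ioi 0), μ (ball (g' y) r) ≤ ENNReal.ofReal M := by
    filter_upwards [hrlt1] with r hr
    calc μ (ball (g' y) r) ≤ μ (ball (g' y) C) :=
          measure_mono (ball_subset_ball (by linarith))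
      _ = ENNReal.ofReal ((μ (ball (g' y) C)).toReal) :=
          (ENNReal.ofReal_toReal measure_ball_lt_top.ne).symm
      _ ≤ ENNReal.ofReal M := ENNReal.ofReal_le_ofReal
          ((le_max_right _ _).trans (le_max_left _ _))
  have main := dims_eq (fun r => ν (ball y r)) (fun r => μ (ball (g' y) r)) C K M
    hC hK1 hM1 hmapC hfM hhM hf0 hh0 E_f E_h
  exact ⟨main.1, main.2⟩
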